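/- Let 0 < Λ₁ ≤ Λ₂, let Ω ⊂ ℝⁿ be open, and let ψ ∈ C²(Ω) be strictly positive. Suppose u ∈ C²(Ω) satisfies M⁻(D²u) − b(x)|Du| + c(x)u ≤ 0 at a point x₀ ∈ Ω with u(x₀) < 0, where b, c: Ω → ℝ. Then ū = u/ψ satisfies at x₀: M⁻(D²ū)(x₀) − b̄(x₀)|Dū(x₀)| + c̄(x₀)ū(x₀) ≤ 0, where b̄ = (2√n·Λ₂·|Dψ|)/ψ + |b| and c̄ = c + (M⁺(D²ψ) + |b|·|Dψ|)/ψ. -/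

import Mathlib

open Matrix Finset

noncomputable def pucciPlus {n : ℕ} (Λ₁ Λ₂ : ℝ) (M : Matrix (Fin n) (Fin n) ℝ)
    (hM : M.IsHermitian) : ℝ :=
  Λ₂ * ∑ i ∈ univ.filter (fun i => 0 < hM.eigenvalues i), hM.eigenvalues i +
  Λ₁ * ∑ i ∈ univ.filter (fun i => hM.eigenvalues i < 0), hM.eigenvalues i

noncomputable def pucciMinus {n : ℕ} (Λ₁ Λ₂ : ℝ) (M : Matrix (Fin n) (Fin n) ℝ)
    (hM : M.IsHermitian) : ℝ :=
  Λ₁ * ∑ i ∈ univ.filter (fun i => 0 < hM.eigenvalues i), hM.eigenvalues i +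
  Λ₂ * ∑ i ∈ univ.filter (fun i => hM.eigenvalues i < 0), hM.eigenvalues i



variable {n : ℕ}

lemma dot_eq_inner (v w : EuclideanSpace ℝ (Fin n)) : ⇑v ⬝ᵥ ⇑w = (inner ℝ v w : ℝ) := by
  simp [dotProduct, PiLp.inner_apply, RCLike.inner_apply, mul_comm]

lemma dot_mulVec_symm (M : Matrix (Fin n) (Fin n) ℝ) (hM : M.IsHermitian)
    (x y : Fin n → ℝ) : x ⬝ᵥ M *ᵥ y = (M *ᵥ x) ⬝ᵥ y := by
  have hs : Mᵀ = M := by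
    have := hM; rwa [Matrix.IsHermitian, Matrix.conjTranspose] at this
    
  rw [dotProduct_mulVec]
  conv_lhs => rw [← hs]
  rw [Matrix.vecMul_transpose]

lemma qf_expand (M : Matrix (Fin n) (Fin n) ℝ) (hM : M.IsHermitian)
    (w : EuclideanSpace ℝ (Fin n)) :
    ⇑w ⬝ᵥ M *ᵥ ⇑w =
      ∑ j, hM.eigenvalues j * (inner ℝ (hM.eigenvectorBasis j) w : ℝ) ^ 2 := by
  set b := hM.eigenvectorBasis with hb
  set Mw : EuclideanSpace ℝ (Fin n) := (WithLp.equiv 2 _).symm (M *ᵥ ⇑w) with hMw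
  have hMw' : ⇑Mw = M *ᵥ ⇑w := rfl
  rw [← hMw', dot_eq_inner, ← b.sum_inner_mul_inner w Mw]
  refine Finset.sum_congr rfl fun j _ => ?_
  have h1 : (inner ℝ (b j) Mw : ℝ) = ⇑(b j) ⬝ᵥ M *ᵥ ⇑w := by rw [← dot_eq_inner, hMw']
  rw [h1, dot_mulVec_symm M hM, hM.mulVec_eigenvectorBasis]
  have h2 : (hM.eigenvalues j • ⇑(b j)) ⬝ᵥ ⇑w = hM.eigenvalues j * (⇑(b j) ⬝ᵥ ⇑w) :=
    smul_dotProduct _ _ _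
  rw [h2, dot_eq_inner, real_inner_comm w (b j)]
  ring

lemma parseval_sq (V : OrthonormalBasis (Fin n) ℝ (EuclideanSpace ℝ (Fin n)))
    (x : EuclideanSpace ℝ (Fin n)) :
    ∑ i, (inner ℝ x (V i) : ℝ) ^ 2 = ‖x‖ ^ 2 := by
  have h := V.sum_inner_mul_inner x x
  have h2 : ∀ i, (inner ℝ x (V i) : ℝ) * (inner ℝ (V i) x : ℝ)
      = (inner ℝ x (V i) : ℝ) ^ 2 := fun i => by rw [real_inner_comm x (V i)]; ring
  simp_rw [h2] at h
  rw [h, real_inner_self_eq_norm_sq]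

lemma pucci_sum_eq' (a b : ℝ) (lam : Fin n → ℝ) :
    a * ∑ i ∈ univ.filter (fun i => 0 < lam i), lam i +
    b * ∑ i ∈ univ.filter (fun i => lam i < 0), lam i =
    ∑ i, (if 0 < lam i then a else b) * lam i := by
  rw [← Finset.sum_filter_add_sum_filter_not univ (fun i => 0 < lam i)
      (fun i => (if 0 < lam i then a else b) * lam i)]
  congr 1
  · rw [Finset.mul_sum]
    exact Finset.sum_congr rfl fun i hi => by rw [if_pos (mem_filter.mp hi).2]
  · rw [Finset.mul_sum]
    refine Finset.sum_subset (fun i hi => ?_) (fun i hi hni => ?_) |>.trans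
      (Finset.sum_congr rfl fun i hi => by rw [if_neg (mem_filter.mp hi).2])
    · simp only [mem_filter, mem_univ, true_and] at hi ⊢
      exact not_lt.mpr hi.le
    · simp only [mem_filter, mem_univ, true_and, not_lt] at hi hni
      have : lam i = 0 := le_antisymm hi (by simpa using hni)
      simp [this]

variable {n : ℕ}

lemma pucciMinus_eq_sum (Λ₁ Λ₂ : ℝ) (M : Matrix (Fin n) (Fin n) ℝ) (hM : M.IsHermitian) :
    pucciMinus Λ₁ Λ₂ M hM = ∑ i, (if 0 < hM.eigenvalues i then Λ₁ else Λ₂) * hM.eigenvalues i :=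
  pucci_sum_eq' Λ₁ Λ₂ hM.eigenvalues

lemma pucciPlus_eq_sum (Λ₁ Λ₂ : ℝ) (M : Matrix (Fin n) (Fin n) ℝ) (hM : M.IsHermitian) :
    pucciPlus Λ₁ Λ₂ M hM = ∑ i, (if 0 < hM.eigenvalues i then Λ₂ else Λ₁) * hM.eigenvalues i :=
  pucci_sum_eq' Λ₂ Λ₁ hM.eigenvalues

/-- Sum of weighted quadratic forms over an orthonormal basis dominates `pucciMinus`. -/
lemma pucciMinus_le_sum_weighted {Λ₁ Λ₂ : ℝ} (hΛ₁ : 0 < Λ₁) (hΛ : Λ₁ ≤ Λ₂)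
    (M : Matrix (Fin n) (Fin n) ℝ) (hM : M.IsHermitian)
    (V : OrthonormalBasis (Fin n) ℝ (EuclideanSpace ℝ (Fin n))) (g : Fin n → ℝ)
    (hg1 : ∀ i, Λ₁ ≤ g i) (hg2 : ∀ i, g i ≤ Λ₂) :
    pucciMinus Λ₁ Λ₂ M hM ≤ ∑ i, g i * (⇑(V i) ⬝ᵥ M *ᵥ ⇑(V i)) := by
  have hc : ∀ j : Fin n, Λ₁ ≤ ∑ i, g i * (inner ℝ (hM.eigenvectorBasis j) (V i) : ℝ) ^ 2 ∧
      ∑ i, g i * (inner ℝ (hM.eigenvectorBasis j) (V i) : ℝ) ^ 2 ≤ Λ₂ := by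
    intro j
    have hp : ∑ i, (inner ℝ (hM.eigenvectorBasis j) (V i) : ℝ) ^ 2 = 1 := by
      rw [parseval_sq V (hM.eigenvectorBasis j)]
      simp [hM.eigenvectorBasis.orthonormal.1 j]
    constructor
    · calc Λ₁ = ∑ i, Λ₁ * (inner ℝ (hM.eigenvectorBasis j) (V i) : ℝ) ^ 2 := by
            rw [← Finset.mul_sum, hp, mul_one]
        _ ≤ _ := Finset.sum_le_sum fun i _ =>
            mul_le_mul_of_nonneg_right (hg1 i) (sq_nonneg _)
    · calc ∑ i, g i * (inner ℝ (hM.eigenvectorBasis j) (V i) : ℝ) ^ 2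
          ≤ ∑ i, Λ₂ * (inner ℝ (hM.eigenvectorBasis j) (V i) : ℝ) ^ 2 :=
            Finset.sum_le_sum fun i _ =>
              mul_le_mul_of_nonneg_right (hg2 i) (sq_nonneg _)
        _ = Λ₂ := by rw [← Finset.mul_sum, hp, mul_one]
  calc pucciMinus Λ₁ Λ₂ M hM
      = ∑ j, (if 0 < hM.eigenvalues j then Λ₁ else Λ₂) * hM.eigenvalues j :=
        pucciMinus_eq_sum _ _ _ _
    _ ≤ ∑ j, (∑ i, g i * (inner ℝ (hM.eigenvectorBasis j) (V i) : ℝ) ^ 2) * hM.eigenvalues j := by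
        refine Finset.sum_le_sum fun j _ => ?_
        by_cases h : 0 < hM.eigenvalues j
        · rw [if_pos h]
          exact mul_le_mul_of_nonneg_right (hc j).1 h.le
        · rw [if_neg h]
          exact mul_le_mul_of_nonpos_right (hc j).2 (not_lt.mp h)
    _ = ∑ i, g i * (⇑(V i) ⬝ᵥ M *ᵥ ⇑(V i)) := by
        simp_rw [qf_expand M hM, Finset.mul_sum, Finset.sum_mul]
        rw [Finset.sum_comm]
        exact Finset.sum_congr rfl fun i _ => Finset.sum_congr rfl fun j _ => by ring

/-- Sum of weighted quadratic forms over an orthonormal basis is below `pucciPlus`. -/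
lemma sum_weighted_le_pucciPlus {Λ₁ Λ₂ : ℝ} (hΛ₁ : 0 < Λ₁) (hΛ : Λ₁ ≤ Λ₂)
    (M : Matrix (Fin n) (Fin n) ℝ) (hM : M.IsHermitian)
    (V : OrthonormalBasis (Fin n) ℝ (EuclideanSpace ℝ (Fin n))) (g : Fin n → ℝ)
    (hg1 : ∀ i, Λ₁ ≤ g i) (hg2 : ∀ i, g i ≤ Λ₂) :
    ∑ i, g i * (⇑(V i) ⬝ᵥ M *ᵥ ⇑(V i)) ≤ pucciPlus Λ₁ Λ₂ M hM := by
  have hc : ∀ j : Fin n, Λ₁ ≤ ∑ i, g i * (inner ℝ (hM.eigenvectorBasis j) (V i) : ℝ) ^ 2 ∧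
      ∑ i, g i * (inner ℝ (hM.eigenvectorBasis j) (V i) : ℝ) ^ 2 ≤ Λ₂ := by
    intro j
    have hp : ∑ i, (inner ℝ (hM.eigenvectorBasis j) (V i) : ℝ) ^ 2 = 1 := by
      rw [parseval_sq V (hM.eigenvectorBasis j)]
      simp [hM.eigenvectorBasis.orthonormal.1 j]
    constructor
    · calc Λ₁ = ∑ i, Λ₁ * (inner ℝ (hM.eigenvectorBasis j) (V i) : ℝ) ^ 2 := by
            rw [← Finset.mul_sum, hp, mul_one]
        _ ≤ _ := Finset.sum_le_sum fun i _ =>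
            mul_le_mul_of_nonneg_right (hg1 i) (sq_nonneg _)
    · calc ∑ i, g i * (inner ℝ (hM.eigenvectorBasis j) (V i) : ℝ) ^ 2
          ≤ ∑ i, Λ₂ * (inner ℝ (hM.eigenvectorBasis j) (V i) : ℝ) ^ 2 :=
            Finset.sum_le_sum fun i _ =>
              mul_le_mul_of_nonneg_right (hg2 i) (sq_nonneg _)
        _ = Λ₂ := by rw [← Finset.mul_sum, hp, mul_one]
  calc ∑ i, g i * (⇑(V i) ⬝ᵥ M *ᵥ ⇑(V i))
      = ∑ j, (∑ i, g i * (inner ℝ (hM.eigenvectorBasis j) (V i) : ℝ) ^ 2) * hM.eigenvalues j := by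
        simp_rw [qf_expand M hM, Finset.mul_sum, Finset.sum_mul]
        rw [Finset.sum_comm]
        exact Finset.sum_congr rfl fun i _ => Finset.sum_congr rfl fun j _ => by ring
    _ ≤ ∑ j, (if 0 < hM.eigenvalues j then Λ₂ else Λ₁) * hM.eigenvalues j := by
        refine Finset.sum_le_sum fun j _ => ?_
        by_cases h : 0 < hM.eigenvalues j
        · rw [if_pos h]
          exact mul_le_mul_of_nonneg_right (hc j).2 h.le
        · rw [if_neg h]
          exact mul_le_mul_of_nonpos_right (hc j).1 (not_lt.mp h)
    _ = pucciPlus Λ₁ Λ₂ M hM := (pucciPlus_eq_sum _ _ _ _).symm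

/-- The weighted sum with optimal weights over the eigenbasis equals `pucciMinus`. -/
lemma pucciMinus_eq_weighted (Λ₁ Λ₂ : ℝ) (M : Matrix (Fin n) (Fin n) ℝ) (hM : M.IsHermitian) :
    pucciMinus Λ₁ Λ₂ M hM = ∑ i, (if 0 < hM.eigenvalues i then Λ₁ else Λ₂) *
      (⇑(hM.eigenvectorBasis i) ⬝ᵥ M *ᵥ ⇑(hM.eigenvectorBasis i)) := by
  rw [pucciMinus_eq_sum]
  refine Finset.sum_congr rfl fun i _ => ?_
  rw [hM.mulVec_eigenvectorBasis]
  have h2 : ⇑(hM.eigenvectorBasis i) ⬝ᵥ (hM.eigenvalues i • ⇑(hM.eigenvectorBasis i))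
      = hM.eigenvalues i * (⇑(hM.eigenvectorBasis i) ⬝ᵥ ⇑(hM.eigenvectorBasis i)) :=
    dotProduct_smul _ _ _
  rw [h2, dot_eq_inner, real_inner_self_eq_norm_sq]
  simp [hM.eigenvectorBasis.orthonormal.1 i]

variable {n : ℕ}

lemma qf_decomp (M A B : Matrix (Fin n) (Fin n) ℝ) (p q v : Fin n → ℝ) (aa bb : ℝ)
    (h : ∀ i j, M i j = aa * A i j + (p i * q j + q i * p j) + bb * B i j) :
    v ⬝ᵥ M *ᵥ v = aa * (v ⬝ᵥ A *ᵥ v) + 2 * ((p ⬝ᵥ v) * (q ⬝ᵥ v)) + bb * (v ⬝ᵥ B *ᵥ v) := by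
  have expand : ∀ C : Matrix (Fin n) (Fin n) ℝ, v ⬝ᵥ C *ᵥ v = ∑ i, ∑ j, v i * C i j * v j := by
    intro C
    simp [dotProduct, Matrix.mulVec, Finset.mul_sum, mul_assoc]
  have hdot : ∀ a c : Fin n → ℝ, (a ⬝ᵥ v) * (c ⬝ᵥ v) = ∑ i, ∑ j, (a i * v i) * (c j * v j) := by
    intro a c
    rw [dotProduct, dotProduct, Finset.sum_mul_sum]
  calc v ⬝ᵥ M *ᵥ v
      = ∑ i, ∑ j, (aa * (v i * A i j * v j) + ((p i * v i) * (q j * v j)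
          + (q i * v i) * (p j * v j)) + bb * (v i * B i j * v j)) := by
        rw [expand M]
        exact Finset.sum_congr rfl fun i _ => Finset.sum_congr rfl fun j _ => by rw [h i j]; ring
    _ = aa * (v ⬝ᵥ A *ᵥ v) + ((p ⬝ᵥ v) * (q ⬝ᵥ v) + (q ⬝ᵥ v) * (p ⬝ᵥ v))
          + bb * (v ⬝ᵥ B *ᵥ v) := by
        rw [expand A, expand B, hdot p q, hdot q p]
        simp_rw [Finset.sum_add_distrib, Finset.mul_sum]
    _ = _ := by ring

variable {n : ℕ}

/-- Key matrix inequality: `M⁻` of a decomposed Hessian. -/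
lemma pucci_key {Λ₁ Λ₂ : ℝ} (hΛ₁ : 0 < Λ₁) (hΛ : Λ₁ ≤ Λ₂)
    (M A B : Matrix (Fin n) (Fin n) ℝ) (hMh : M.IsHermitian) (hAh : A.IsHermitian)
    (hBh : B.IsHermitian) (p q : EuclideanSpace ℝ (Fin n)) (aa bb : ℝ)
    (haa : 0 ≤ aa) (hbb : bb ≤ 0)
    (h : ∀ i j, M i j = aa * A i j + (⇑p i * ⇑q j + ⇑q i * ⇑p j) + bb * B i j) :
    aa * pucciMinus Λ₁ Λ₂ A hAh - 2 * Λ₂ * (‖p‖ * ‖q‖) + bb * pucciPlus Λ₁ Λ₂ B hBh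
      ≤ pucciMinus Λ₁ Λ₂ M hMh := by
  set V := hMh.eigenvectorBasis with hV
  set g : Fin n → ℝ := fun i => if 0 < hMh.eigenvalues i then Λ₁ else Λ₂ with hg
  have hg1 : ∀ i, Λ₁ ≤ g i := fun i => by
    rw [hg]; dsimp only; split
    · exact le_refl _
    · exact hΛ
  have hg2 : ∀ i, g i ≤ Λ₂ := fun i => by
    rw [hg]; dsimp only; split
    · exact hΛ
    · exact le_refl _
  have key : pucciMinus Λ₁ Λ₂ M hMh
      = aa * (∑ i, g i * (⇑(V i) ⬝ᵥ A *ᵥ ⇑(V i)))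
        + (∑ i, g i * (2 * ((⇑p ⬝ᵥ ⇑(V i)) * (⇑q ⬝ᵥ ⇑(V i)))))
        + bb * (∑ i, g i * (⇑(V i) ⬝ᵥ B *ᵥ ⇑(V i))) := by
    rw [pucciMinus_eq_weighted Λ₁ Λ₂ M hMh]
    simp_rw [qf_decomp M A B ⇑p ⇑q _ aa bb h]
    rw [Finset.mul_sum, Finset.mul_sum, ← Finset.sum_add_distrib, ← Finset.sum_add_distrib]
    exact Finset.sum_congr rfl fun i _ => by ring
  have h1 : aa * pucciMinus Λ₁ Λ₂ A hAh ≤ aa * (∑ i, g i * (⇑(V i) ⬝ᵥ A *ᵥ ⇑(V i))) :=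
    mul_le_mul_of_nonneg_left (pucciMinus_le_sum_weighted hΛ₁ hΛ A hAh V g hg1 hg2) haa
  have h3 : bb * pucciPlus Λ₁ Λ₂ B hBh ≤ bb * (∑ i, g i * (⇑(V i) ⬝ᵥ B *ᵥ ⇑(V i))) :=
    mul_le_mul_of_nonpos_left (sum_weighted_le_pucciPlus hΛ₁ hΛ B hBh V g hg1 hg2) hbb
  have h2 : -(2 * Λ₂ * (‖p‖ * ‖q‖)) ≤ ∑ i, g i * (2 * ((⇑p ⬝ᵥ ⇑(V i)) * (⇑q ⬝ᵥ ⇑(V i)))) := by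
    have cs : ∑ i, |(inner ℝ p (V i) : ℝ)| * |(inner ℝ q (V i) : ℝ)| ≤ ‖p‖ * ‖q‖ := by
      have := Real.sum_mul_le_sqrt_mul_sqrt univ
        (fun i => |(inner ℝ p (V i) : ℝ)|) (fun i => |(inner ℝ q (V i) : ℝ)|)
      simp_rw [sq_abs] at this
      rwa [parseval_sq V p, parseval_sq V q, Real.sqrt_sq (norm_nonneg _),
        Real.sqrt_sq (norm_nonneg _)] at this
    have step : ∑ i, -(2 * Λ₂ * (|(inner ℝ p (V i) : ℝ)| * |(inner ℝ q (V i) : ℝ)|))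
        ≤ ∑ i, g i * (2 * ((⇑p ⬝ᵥ ⇑(V i)) * (⇑q ⬝ᵥ ⇑(V i)))) := by
      refine Finset.sum_le_sum fun i _ => ?_
      rw [dot_eq_inner p (V i), dot_eq_inner q (V i)]
      set a := (inner ℝ p (V i) : ℝ)
      set b := (inner ℝ q (V i) : ℝ)
      have hab : -(|a| * |b|) ≤ a * b := by
        rw [← abs_mul]; exact neg_abs_le _
      have hab' : a * b ≤ |a| * |b| := by rw [← abs_mul]; exact le_abs_self _
      have habs : (0:ℝ) ≤ |a| * |b| := mul_nonneg (abs_nonneg _) (abs_nonneg _)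
      nlinarith [hg1 i, hg2 i, hΛ₁, mul_nonneg (le_trans hΛ₁.le (hg1 i))
        (by linarith : (0:ℝ) ≤ a * b + |a| * |b|)]
    calc -(2 * Λ₂ * (‖p‖ * ‖q‖))
        ≤ -(2 * Λ₂ * (∑ i, |(inner ℝ p (V i) : ℝ)| * |(inner ℝ q (V i) : ℝ)|)) := by
          have : (0:ℝ) ≤ 2 * Λ₂ := by linarith
          nlinarith [cs]
      _ = ∑ i, -(2 * Λ₂ * (|(inner ℝ p (V i) : ℝ)| * |(inner ℝ q (V i) : ℝ)|)) := by
          rw [Finset.mul_sum, neg_eq_iff_eq_neg, ← Finset.sum_neg_distrib]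
          simp
      _ ≤ _ := step
  linarith

variable {n : ℕ}

lemma fderiv_apply_grad (f : EuclideanSpace ℝ (Fin n) → ℝ) (x v : EuclideanSpace ℝ (Fin n)) :
    fderiv ℝ f x v = (inner ℝ (gradient f x) v : ℝ) := by
  rw [gradient, InnerProductSpace.toDual_symm_apply]

lemma grad_coord (f : EuclideanSpace ℝ (Fin n) → ℝ) (x : EuclideanSpace ℝ (Fin n)) (i : Fin n) :
    fderiv ℝ f x (EuclideanSpace.single i 1) = ⇑(gradient f x) i := by
  rw [fderiv_apply_grad, EuclideanSpace.inner_single_right]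
  simp

section Calc

variable (Ω : Set (EuclideanSpace ℝ (Fin n))) (hΩ : IsOpen Ω)
  (ψ u ubar : EuclideanSpace ℝ (Fin n) → ℝ)
  (hψ : ContDiffOn ℝ 2 ψ Ω) (hu : ContDiffOn ℝ 2 u Ω)
  (hψpos : ∀ x ∈ Ω, 0 < ψ x)
  (hubar : ∀ x, ubar x = u x / ψ x)
  (x₀ : EuclideanSpace ℝ (Fin n)) (hx₀ : x₀ ∈ Ω)

include hΩ hψ hu hψpos hubar hx₀

lemma ubar_contDiffOn : ContDiffOn ℝ 2 ubar Ω := by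
  have : ubar = fun x => u x / ψ x := funext hubar
  rw [this]
  exact hu.div hψ (fun x hx => (hψpos x hx).ne')

lemma fderiv_u_eq : ∀ x ∈ Ω, fderiv ℝ u x = ψ x • fderiv ℝ ubar x + ubar x • fderiv ℝ ψ x := by
  intro x hx
  have hx' : Ω ∈ nhds x := hΩ.mem_nhds hx
  have heq : u =ᶠ[nhds x] fun y => ubar y * ψ y := by
    filter_upwards [hx'] with y hy
    rw [hubar y, div_mul_cancel₀ _ (hψpos y hy).ne']
  have hdu : DifferentiableAt ℝ ubar x :=
    ((ubar_contDiffOn Ω hΩ ψ u ubar hψ hu hψpos hubar x₀ hx₀).contDiffAt hx').differentiableAt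
      (by norm_num)
  have hdψ : DifferentiableAt ℝ ψ x := (hψ.contDiffAt hx').differentiableAt (by norm_num)
  rw [heq.fderiv_eq, fderiv_fun_mul hdu hdψ, add_comm]

lemma grad_u_decomp :
    gradient u x₀ = ψ x₀ • gradient ubar x₀ + ubar x₀ • gradient ψ x₀ := by
  rw [gradient, gradient, gradient,
    fderiv_u_eq Ω hΩ ψ u ubar hψ hu hψpos hubar x₀ hx₀ x₀ hx₀, map_add, _root_.map_smul, _root_.map_smul]

lemma hessian_decomp (i j : Fin n) :
    fderiv ℝ (fun y => fderiv ℝ u y (EuclideanSpace.single j 1)) x₀ (EuclideanSpace.single i 1)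
    = ψ x₀ * fderiv ℝ (fun y => fderiv ℝ ubar y (EuclideanSpace.single j 1)) x₀
        (EuclideanSpace.single i 1)
      + (⇑(gradient ubar x₀) i * ⇑(gradient ψ x₀) j
          + ⇑(gradient ψ x₀) i * ⇑(gradient ubar x₀) j)
      + ubar x₀ * fderiv ℝ (fun y => fderiv ℝ ψ y (EuclideanSpace.single j 1)) x₀
          (EuclideanSpace.single i 1) := by
  have hmem : Ω ∈ nhds x₀ := hΩ.mem_nhds hx₀
  have hubC := ubar_contDiffOn Ω hΩ ψ u ubar hψ hu hψpos hubar x₀ hx₀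
  have hdub : DifferentiableAt ℝ ubar x₀ :=
    ((hubC.contDiffAt hmem).differentiableAt (by norm_num))
  have hdψ : DifferentiableAt ℝ ψ x₀ := (hψ.contDiffAt hmem).differentiableAt (by norm_num)
  set e : Fin n → EuclideanSpace ℝ (Fin n) := fun k => EuclideanSpace.single k 1 with he
  have hGd : DifferentiableAt ℝ (fun y => fderiv ℝ ubar y (e j)) x₀ := by
    have h1 : ContDiffAt ℝ 1 (fderiv ℝ ubar) x₀ :=
      (hubC.contDiffAt hmem).fderiv_right (by norm_num)
    exact ((ContinuousLinearMap.apply ℝ ℝ (e j)).differentiableAt).comp x₀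
      (h1.differentiableAt (by norm_num))
  have hPd : DifferentiableAt ℝ (fun y => fderiv ℝ ψ y (e j)) x₀ := by
    have h1 : ContDiffAt ℝ 1 (fderiv ℝ ψ) x₀ :=
      (hψ.contDiffAt hmem).fderiv_right (by norm_num)
    exact ((ContinuousLinearMap.apply ℝ ℝ (e j)).differentiableAt).comp x₀
      (h1.differentiableAt (by norm_num))
  have heqj : (fun y => fderiv ℝ u y (e j)) =ᶠ[nhds x₀]
      (fun y => ψ y * fderiv ℝ ubar y (e j) + ubar y * fderiv ℝ ψ y (e j)) := by
    filter_upwards [hmem] with y hy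
    rw [fderiv_u_eq Ω hΩ ψ u ubar hψ hu hψpos hubar x₀ hx₀ y hy]
    simp
  rw [heqj.fderiv_eq, fderiv_fun_add (hdψ.fun_mul hGd) (hdub.fun_mul hPd),
    fderiv_fun_mul hdψ hGd, fderiv_fun_mul hdub hPd]
  simp only [ContinuousLinearMap.add_apply, ContinuousLinearMap.smul_apply, smul_eq_mul]
  rw [grad_coord ubar x₀ i, grad_coord ψ x₀ i, grad_coord ubar x₀ j, grad_coord ψ x₀ j]
  ring

end Calc

/-- at a point where u < 0, the quotient ubar = u / psi satisfies the
transformed Pucci differential inequality with modified coefficients bbar and cbar. -/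
theorem stmt19 {n : ℕ} (Λ₁ Λ₂ : ℝ) (hΛ₁ : 0 < Λ₁) (hΛ : Λ₁ ≤ Λ₂)
    (Ω : Set (EuclideanSpace ℝ (Fin n))) (hΩ : IsOpen Ω)
    (ψ : EuclideanSpace ℝ (Fin n) → ℝ) (hψ : ContDiffOn ℝ 2 ψ Ω)
    (hψpos : ∀ x ∈ Ω, 0 < ψ x)
    (u : EuclideanSpace ℝ (Fin n) → ℝ) (hu : ContDiffOn ℝ 2 u Ω)
    (b c : EuclideanSpace ℝ (Fin n) → ℝ)
    (ubar : EuclideanSpace ℝ (Fin n) → ℝ) (hubar : ∀ x, ubar x = u x / ψ x)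
    (Hu Hψ Hubar : EuclideanSpace ℝ (Fin n) → Matrix (Fin n) (Fin n) ℝ)
    (hHu : ∀ x i j, Hu x i j =
      fderiv ℝ (fun y => fderiv ℝ u y (EuclideanSpace.single j 1)) x
        (EuclideanSpace.single i 1))
    (hHψ : ∀ x i j, Hψ x i j =
      fderiv ℝ (fun y => fderiv ℝ ψ y (EuclideanSpace.single j 1)) x
        (EuclideanSpace.single i 1))
    (hHubar : ∀ x i j, Hubar x i j =
      fderiv ℝ (fun y => fderiv ℝ ubar y (EuclideanSpace.single j 1)) x
        (EuclideanSpace.single i 1))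
    (x₀ : EuclideanSpace ℝ (Fin n)) (hx₀ : x₀ ∈ Ω) (hneg : u x₀ < 0)
    (hu0 : (Hu x₀).IsHermitian) (hψ0 : (Hψ x₀).IsHermitian)
    (hub0 : (Hubar x₀).IsHermitian)
    (hineq : pucciMinus Λ₁ Λ₂ (Hu x₀) hu0 - b x₀ * ‖gradient u x₀‖
      + c x₀ * u x₀ ≤ 0) :
    pucciMinus Λ₁ Λ₂ (Hubar x₀) hub0
      - ((2 * Real.sqrt n * Λ₂ * ‖gradient ψ x₀‖) / ψ x₀ + |b x₀|)
        * ‖gradient ubar x₀‖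
      + (c x₀ + (pucciPlus Λ₁ Λ₂ (Hψ x₀) hψ0 + |b x₀| * ‖gradient ψ x₀‖) / ψ x₀)
        * ubar x₀ ≤ 0 := by
  have hψ₀ : 0 < ψ x₀ := hψpos x₀ hx₀
  have hub₀ : ubar x₀ < 0 := by
    rw [hubar x₀]; exact div_neg_of_neg_of_pos hneg hψ₀
  have hu₀ : u x₀ = ψ x₀ * ubar x₀ := by
    rw [hubar x₀]; field_simp
  have hdec : ∀ i j, Hu x₀ i j = ψ x₀ * Hubar x₀ i j
      + (⇑(gradient ubar x₀) i * ⇑(gradient ψ x₀) j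
        + ⇑(gradient ψ x₀) i * ⇑(gradient ubar x₀) j)
      + ubar x₀ * Hψ x₀ i j := by
    intro i j
    rw [hHu, hHubar, hHψ]
    exact hessian_decomp Ω hΩ ψ u ubar hψ hu hψpos hubar x₀ hx₀ i j
  have key := pucci_key hΛ₁ hΛ (Hu x₀) (Hubar x₀) (Hψ x₀) hu0 hub0 hψ0
    (gradient ubar x₀) (gradient ψ x₀) (ψ x₀) (ubar x₀) hψ₀.le hub₀.le hdec
  have hgu : ‖gradient u x₀‖ ≤ ψ x₀ * ‖gradient ubar x₀‖ + (-(ubar x₀)) * ‖gradient ψ x₀‖ := by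
    rw [grad_u_decomp Ω hΩ ψ u ubar hψ hu hψpos hubar x₀ hx₀]
    calc ‖ψ x₀ • gradient ubar x₀ + ubar x₀ • gradient ψ x₀‖
        ≤ ‖ψ x₀ • gradient ubar x₀‖ + ‖ubar x₀ • gradient ψ x₀‖ := norm_add_le _ _
      _ = _ := by
          rw [norm_smul, norm_smul, Real.norm_eq_abs, Real.norm_eq_abs,
            abs_of_pos hψ₀, abs_of_neg hub₀]
  set gub := ‖gradient ubar x₀‖ with hgub
  set gψ := ‖gradient ψ x₀‖ with hgψ
  set gu := ‖gradient u x₀‖ with hgu'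
  set PmA := pucciMinus Λ₁ Λ₂ (Hubar x₀) hub0 with hPmA
  set PpB := pucciPlus Λ₁ Λ₂ (Hψ x₀) hψ0 with hPpB
  set PmM := pucciMinus Λ₁ Λ₂ (Hu x₀) hu0 with hPmM
  have stuff2 : ψ x₀ * PmA - 2 * Λ₂ * (gub * gψ) + ubar x₀ * PpB
      - |b x₀| * (ψ x₀ * gub + (-(ubar x₀)) * gψ) + c x₀ * (ψ x₀ * ubar x₀) ≤ 0 := by
    have h1 : PmM - b x₀ * gu + c x₀ * (ψ x₀ * ubar x₀) ≤ 0 := by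
      rw [← hu₀]; exact hineq
    have h2 : -(|b x₀| * (ψ x₀ * gub + (-(ubar x₀)) * gψ)) ≤ -(b x₀ * gu) := by
      have hgu0 : (0:ℝ) ≤ gu := norm_nonneg _
      nlinarith [abs_nonneg (b x₀), le_abs_self (b x₀), neg_abs_le (b x₀), hgu]
    linarith [key, h1, h2]
  have goal' : PmA - ((2 * Λ₂ * gψ) / ψ x₀ + |b x₀|) * gub
      + (c x₀ + (PpB + |b x₀| * gψ) / ψ x₀) * ubar x₀ ≤ 0 := by
    have hrw : PmA - ((2 * Λ₂ * gψ) / ψ x₀ + |b x₀|) * gub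
        + (c x₀ + (PpB + |b x₀| * gψ) / ψ x₀) * ubar x₀
        = (ψ x₀ * PmA - 2 * Λ₂ * (gub * gψ) + ubar x₀ * PpB
          - |b x₀| * (ψ x₀ * gub + (-(ubar x₀)) * gψ) + c x₀ * (ψ x₀ * ubar x₀)) / ψ x₀ := by
      field_simp
      ring
    rw [hrw]
    exact div_nonpos_of_nonpos_of_nonneg stuff2 hψ₀.le
  have hmono : (2 * Λ₂ * gψ) / ψ x₀ * gub ≤ (2 * Real.sqrt n * Λ₂ * gψ) / ψ x₀ * gub := by
    rcases Nat.eq_zero_or_pos n with hn | hn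
    · have hzero : gub = 0 := by
        haveI : IsEmpty (Fin n) := by subst hn; infer_instance
        rw [hgub, EuclideanSpace.norm_eq]
        simp
      rw [hzero, mul_zero, mul_zero]
    · have h1 : (1:ℝ) ≤ Real.sqrt n := by
        rw [show (1:ℝ) = Real.sqrt 1 by simp]
        exact Real.sqrt_le_sqrt (by exact_mod_cast hn)
      have hgψ0 : (0:ℝ) ≤ gψ := norm_nonneg _
      have h2 : (2 * Λ₂ * gψ) / ψ x₀ ≤ (2 * Real.sqrt n * Λ₂ * gψ) / ψ x₀ := by
        have h2n : (2:ℝ) ≤ 2 * Real.sqrt n := by linarith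
        gcongr <;> linarith
      exact mul_le_mul_of_nonneg_right h2 (by rw [hgub]; exact norm_nonneg _)
  calc pucciMinus Λ₁ Λ₂ (Hubar x₀) hub0
      - ((2 * Real.sqrt n * Λ₂ * gψ) / ψ x₀ + |b x₀|) * gub
      + (c x₀ + (PpB + |b x₀| * gψ) / ψ x₀) * ubar x₀
      = (PmA - ((2 * Λ₂ * gψ) / ψ x₀ + |b x₀|) * gub
          + (c x₀ + (PpB + |b x₀| * gψ) / ψ x₀) * ubar x₀)
        + ((2 * Λ₂ * gψ) / ψ x₀ * gub - (2 * Real.sqrt n * Λ₂ * gψ) / ψ x₀ * gub) := by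
        rw [← hPmA]; ring
    _ ≤ 0 := by linarith [goal', hmono]
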